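/- Let I ⊂ R = ℂ[s,u,t,v] be minimally generated by r ≥ 4 bihomogeneous forms f_1,…,f_r of bidegree (m,n) with m, n ≥ 1. Assume that the image of the rational map φ_I = [f_1,…,f_r] : P¹ × P¹ ⇢ P^{r−1} has dimension 2 and that V(I) ⊂ P¹ × P¹ is finite. Then for a generic linear form ℓ ∈ R_{1,0}, the image I_ℓ of I in the quotient ring R/⟨ℓ⟩ is minimally generated by at least 2 elements. -/

import Mathlib

noncomputable section

open MvPolynomial Finset

/-- The saturation of a submodule `M ⊆ N` with respect to an ideal `J`:
`{x ∈ N : J^e • x ⊆ M for some e}`. -/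
def satur {A : Type*} [CommRing A] {N : Type*} [AddCommGroup N] [Module A N]
    (J : Ideal A) (M : Submodule A N) : Submodule A N where
  carrier := {x | ∃ e : ℕ, ∀ r ∈ J ^ e, r • x ∈ M}
  add_mem' := by
    rintro a b ⟨e₁, h₁⟩ ⟨e₂, h₂⟩
    refine ⟨max e₁ e₂, fun r hr => ?_⟩
    rw [smul_add]
    exact M.add_mem (h₁ r (Ideal.pow_le_pow_right (le_max_left _ _) hr))
      (h₂ r (Ideal.pow_le_pow_right (le_max_right _ _) hr))
  zero_mem' := ⟨0, fun r _ => by simp⟩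
  smul_mem' := by
    rintro c x ⟨e, h⟩
    refine ⟨e, fun r hr => ?_⟩
    rw [smul_comm]
    exact M.smul_mem c (h r hr)

/-- The variables `s, u; t, v` of the ℤ²-graded ring `R = ℂ[s,u,t,v]`. -/
abbrev BVars := Fin 2 ⊕ Fin 2

/-- `R = ℂ[s,u,t,v]`. -/
abbrev RB := MvPolynomial BVars ℂ

/-- The bigrading: `deg s = deg u = (1,0)`, `deg t = deg v = (0,1)`. -/
def bw : BVars → ℤ × ℤ :=
  Sum.elim (fun _ => ((1 : ℤ), (0 : ℤ))) (fun _ => ((0 : ℤ), (1 : ℤ)))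

/-- The set of bihomogeneous elements of bidegree `d` of `R`. -/
def homB (d : ℤ × ℤ) : Set RB := {f | f.IsWeightedHomogeneous bw d}

/-- The generators `st, sv, ut, uv` of the irrelevant ideal `𝔪 = ⟨s,u⟩ ∩ ⟨t,v⟩`. -/
def mGen : Fin 4 → RB :=
  ![X (Sum.inl 0) * X (Sum.inr 0), X (Sum.inl 0) * X (Sum.inr 1),
    X (Sum.inl 1) * X (Sum.inr 0), X (Sum.inl 1) * X (Sum.inr 1)]

/-- The bidegrees of the generators of `𝔪`. -/
def mW : Fin 4 → ℤ × ℤ := fun _ => (1, 1)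

/-- The irrelevant ideal `𝔪 = ⟨s,u⟩ ∩ ⟨t,v⟩ = ⟨st, sv, ut, uv⟩`. -/
def mIdeal : Ideal RB := Ideal.span (Set.range mGen)

/-- Points of `P¹ × P¹` (over ℂ). -/
abbrev PtPP := Projectivization ℂ (Fin 2 → ℂ) × Projectivization ℂ (Fin 2 → ℂ)

/-- Evaluation of a polynomial at (a representative of) a point of `P¹ × P¹`. -/
def evalP (p : PtPP) (g : RB) : ℂ := eval (Sum.elim p.1.rep p.2.rep) g

/-- The vanishing locus in `P¹ × P¹` of a set of (bihomogeneous) polynomials. -/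
def biV (fs : Set RB) : Set PtPP := {p | ∀ g ∈ fs, evalP p g = 0}

/-- The point `p` of `V(⟨gens⟩)` is a local complete intersection: the stalk at `p` of
the ideal sheaf associated to `⟨gens⟩` is generated by two elements.  (Stalk elements are
fractions `w/h` with `w` bihomogeneous in the ideal and `h` bihomogeneous with `h(p) ≠ 0`.) -/
def IsLCIat (gens : Set RB) (p : PtPP) : Prop :=
  ∃ f g : RB, f ∈ Ideal.span gens ∧ g ∈ Ideal.span gens ∧
    (∃ df : ℤ × ℤ, f ∈ homB df) ∧ (∃ dg : ℤ × ℤ, g ∈ homB dg) ∧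
    ∀ w ∈ gens, ∃ h : RB, (∃ dh : ℤ × ℤ, h ∈ homB dh) ∧ evalP p h ≠ 0 ∧
      h * w ∈ Ideal.span {f, g}

/-- The bidegree-`d` graded piece of `R ⧸ J`, as a ℂ-subspace. -/
def quotPiece (J : Ideal RB) (d : ℤ × ℤ) : Submodule ℂ (RB ⧸ J) :=
  (weightedHomogeneousSubmodule ℂ bw d).map (Ideal.Quotient.mkₐ ℂ J).toLinearMap

/-- `D = deg V(J)`: the degree of the zero-dimensional subscheme `V(J) ⊆ P¹ × P¹`,
i.e. the eventual (constant) value of `dim_ℂ (R/J^sat)_{k,k'}`. -/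
def IsVDeg (J : Ideal RB) (D : ℕ) : Prop :=
  ∃ d₀ : ℤ × ℤ, ∀ d : ℤ × ℤ, d₀ ≤ d →
    Module.finrank ℂ (quotPiece (satur mIdeal J) d) = D

/-- The space of bidegree-`d` syzygies on the family `b`:
`{(A_i) : each A_i is bihomogeneous of bidegree d and ∑ A_i b_i = 0}`. -/
def syzSpace {q : ℕ} (b : Fin q → RB) (d : ℤ × ℤ) : Submodule ℂ (Fin q → RB) :=
  (⨅ i, Submodule.comap (LinearMap.proj (R := ℂ) i)
      (weightedHomogeneousSubmodule ℂ bw d)) ⊓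
    LinearMap.ker (∑ i, (LinearMap.mulLeft ℂ (b i)).comp (LinearMap.proj (R := ℂ) i))

lemma wdeg_comp {d : BVars →₀ ℕ} {m n : ℕ} (h : (Finsupp.weight bw) d = ((m:ℤ), (n:ℤ))) :
    d (Sum.inl 0) + d (Sum.inl 1) = m ∧ d (Sum.inr 0) + d (Sum.inr 1) = n := by
  rw [Finsupp.weight_apply] at h
  rw [Finsupp.sum_fintype _ _ (fun i => zero_smul ℕ (bw i))] at h
  rw [Fintype.sum_sum_type] at h
  simp only [bw, Sum.elim_inl, Sum.elim_inr, Fin.sum_univ_two, Prod.smul_mk,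
    smul_zero, Prod.mk_add_mk, Prod.mk.injEq, nsmul_eq_mul, mul_one, mul_zero] at h
  obtain ⟨h1, h2⟩ := h
  exact ⟨by omega, by omega⟩

lemma scale_eval {f : RB} {m n : ℕ} (hf : f.IsWeightedHomogeneous bw ((m:ℤ), (n:ℤ)))
    (a b : ℂ) (x y : Fin 2 → ℂ) :
    eval (Sum.elim (fun i => a * x i) (fun i => b * y i)) f
      = a ^ m * b ^ n * eval (Sum.elim x y) f := by
  rw [eval_eq', eval_eq', Finset.mul_sum]
  refine Finset.sum_congr rfl fun d hd => ?_
  obtain ⟨h1, h2⟩ := wdeg_comp (hf (mem_support_iff.mp hd))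
  rw [Fintype.prod_sum_type, Fintype.prod_sum_type]
  simp only [Sum.elim_inl, Sum.elim_inr, Fin.prod_univ_two, mul_pow]
  rw [← h1, ← h2]
  ring

lemma eval_aeval' (σf : BVars → RB) (y : BVars → ℂ) (f : RB) :
    eval y (aeval σf f) = eval (fun i => eval y (σf i)) f := by
  induction f using MvPolynomial.induction_on with
  | C => simp
  | add p q hp hq => simp only [map_add, hp, hq]
  | mul_X p i hp => simp only [map_mul, aeval_X, eval_mul, eval_X, hp]

/-- substitution `s,u ↦ 0`, `t,v ↦` the two variables of `ℂ[v][t]` -/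
def ψB : RB →+* Polynomial (Polynomial ℂ) :=
  eval₂Hom (Polynomial.C.comp Polynomial.C)
    (Sum.elim (fun _ => 0) ![Polynomial.X, Polynomial.C Polynomial.X])

def evTV (t0 v0 : ℂ) : Polynomial (Polynomial ℂ) →+* ℂ :=
  Polynomial.eval₂RingHom (Polynomial.evalRingHom v0) t0

lemma evTV_psi (t0 v0 : ℂ) (f : RB) :
    evTV t0 v0 (ψB f) = eval (Sum.elim ![(0:ℂ),0] ![t0,v0]) f := by
  induction f using MvPolynomial.induction_on with
  | C a => simp [ψB, evTV]
  | add p q hp hq => simp only [map_add, hp, hq]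
  | mul_X p i hp =>
      rw [map_mul, map_mul, eval_mul, hp, eval_X]
      congr 1
      have : ψB (X i) = Sum.elim (fun _ => 0) ![Polynomial.X, Polynomial.C Polynomial.X] i := by
        simp [ψB]
      rw [this]
      rcases i with j | j <;> fin_cases j <;> simp [evTV]

lemma evTV_eq_map_eval (t0 v0 : ℂ) (Q : Polynomial (Polynomial ℂ)) :
    evTV t0 v0 Q = (Q.map (Polynomial.evalRingHom v0)).eval t0 := by
  rw [Polynomial.eval_map]; rfl

lemma exists_tv_zero (Q : Polynomial (Polynomial ℂ)) (h0 : evTV 0 0 Q = 0) :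
    ∃ t0 v0 : ℂ, (t0 ≠ 0 ∨ v0 ≠ 0) ∧ evTV t0 v0 Q = 0 := by
  by_cases hd : Q.natDegree = 0
  · obtain ⟨q, rfl⟩ := Polynomial.natDegree_eq_zero.mp hd
    refine ⟨1, 0, Or.inl one_ne_zero, ?_⟩
    rw [evTV_eq_map_eval] at h0 ⊢
    simpa using h0
  · have hQ0 : Q ≠ 0 := fun h => hd (by simp [h])
    have hlc : Q.leadingCoeff ≠ 0 := Polynomial.leadingCoeff_ne_zero.mpr hQ0
    have hex : ∃ v0 : ℂ, (Polynomial.X * Q.leadingCoeff).eval v0 ≠ 0 := by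
      by_contra hcon
      push_neg at hcon
      have hset : {x : ℂ | (Polynomial.X * Q.leadingCoeff).IsRoot x} = Set.univ :=
        Set.eq_univ_iff_forall.mpr hcon
      have hinf : {x : ℂ | (Polynomial.X * Q.leadingCoeff).IsRoot x}.Infinite := by
        rw [hset]; exact Set.infinite_univ
      exact mul_ne_zero Polynomial.X_ne_zero hlc (Polynomial.eq_zero_of_infinite_isRoot _ hinf)
    obtain ⟨v0, hv0⟩ := hex
    rw [Polynomial.eval_mul, Polynomial.eval_X, mul_ne_zero_iff] at hv0
    obtain ⟨hv0ne, hlcv⟩ := hv0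
    set Qv := Q.map (Polynomial.evalRingHom v0) with hQv
    have hdeg : Qv.natDegree = Q.natDegree :=
      Polynomial.natDegree_map_of_leadingCoeff_ne_zero _ hlcv
    have hpos : 0 < Qv.degree := by
      rw [← Polynomial.natDegree_pos_iff_degree_pos, hdeg]
      omega
    obtain ⟨t0, ht0⟩ := Complex.exists_root hpos
    exact ⟨t0, v0, Or.inr hv0ne, by rw [evTV_eq_map_eval]; exact ht0⟩

/-!
STATEMENT 7: Let `I ⊆ R = ℂ[s,u,t,v]` be minimally generated by `r ≥ 4` bihomogeneous
forms of bidegree `(m,n)`, `m,n ≥ 1`, such that the image of `φ_I` has dimension `2`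
(equivalently, the coordinate ring `ℂ[f_1,…,f_r]` of its affine cone has Krull dimension
`3`) and `V(I) ⊆ P¹ × P¹` is finite.  Then for a generic linear form `ℓ ∈ R_{1,0}` the
image `I_ℓ` of `I` in `R/⟨ℓ⟩` is minimally generated by at least `2` elements (i.e. it is
not principal).  "Generic" means: for all `ℓ = c₀ s + c₁ u` with `(c₀,c₁)` in a nonempty
Zariski-open subset of `ℂ²`.  Minimality of the generating set of same-bidegree forms is
expressed by their linear independence over `ℂ`.
-/
theorem stmt7 (m n r : ℕ) (hm : 1 ≤ m) (hn : 1 ≤ n) (hr : 4 ≤ r)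
    (g : Fin r → RB) (I : Ideal RB) (hI : I = Ideal.span (Set.range g))
    (hbihom : ∀ i, (g i).IsWeightedHomogeneous bw ((m : ℤ), (n : ℤ)))
    (hmin : LinearIndependent ℂ g)
    (hdim : ringKrullDim (Algebra.adjoin ℂ (Set.range g)) = 3)
    (hfin : (biV (Set.range g)).Finite) :
    ∃ P : MvPolynomial (Fin 2) ℂ, P ≠ 0 ∧
      ∀ c : Fin 2 → ℂ, eval c P ≠ 0 →
        ¬ ∃ z : RB ⧸ Ideal.span {C (c 0) * X (Sum.inl 0) + C (c 1) * X (Sum.inl 1)},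
          Ideal.map
            (Ideal.Quotient.mk
              (Ideal.span {C (c 0) * X (Sum.inl 0) + C (c 1) * X (Sum.inl 1)})) I =
          Ideal.span {z} := by
  classical
  set S : Finset (Projectivization ℂ (Fin 2 → ℂ)) := hfin.toFinset.image Prod.fst with hS
  refine ⟨X 0 * ∏ q ∈ S, (C (q.rep 0) * X 0 + C (q.rep 1) * X 1), ?_, ?_⟩
  · refine mul_ne_zero (X_ne_zero _) (Finset.prod_ne_zero_iff.mpr fun q _ => ?_)
    intro h
    have h0 := congrArg (eval ![(1:ℂ), 0]) h
    have h1 := congrArg (eval ![(0:ℂ), 1]) h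
    simp at h0 h1
    exact q.rep_nonzero (funext fun i => by fin_cases i <;> assumption)
  · intro c hc
    rw [eval_mul, eval_prod, mul_ne_zero_iff] at hc
    obtain ⟨hc0, hcprod⟩ := hc
    rw [eval_X] at hc0
    have hfac : ∀ q ∈ S, q.rep 0 * c 0 + q.rep 1 * c 1 ≠ 0 := by
      intro q hq hzero
      refine Finset.prod_ne_zero_iff.mp hcprod q hq ?_
      simpa using hzero
    set ℓp : RB := C (c 0) * X (Sum.inl 0) + C (c 1) * X (Sum.inl 1) with hℓp
    rintro ⟨z, hz⟩
    set lamc : ℂ := -(c 1) / (c 0) with hlam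
    set σf : BVars → RB := Sum.elim ![C lamc, 1] (fun j => X (Sum.inr j)) with hσ
    set φ := (aeval σf : RB →ₐ[ℂ] RB) with hφ
    have hφℓ : φ ℓp = 0 := by
      rw [hℓp, hφ, hσ]
      simp only [map_add, map_mul, aeval_C, aeval_X, Sum.elim_inl, Matrix.cons_val_zero,
        Matrix.cons_val_one, Matrix.head_cons, algebraMap_eq, mul_one]
      rw [← C_mul, ← C_add, ← C_0]
      congr 1
      rw [hlam]; field_simp; ring
    have hsur : Function.Surjective (Ideal.Quotient.mk (Ideal.span {ℓp})) :=
      Ideal.Quotient.mk_surjective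
    have hzmem : z ∈ Ideal.map (Ideal.Quotient.mk (Ideal.span {ℓp})) I := by
      rw [hz]; exact Ideal.mem_span_singleton_self z
    obtain ⟨w, hwI, hwz⟩ := (Ideal.mem_map_iff_of_surjective _ hsur).mp hzmem
    have hgen : ∀ i, ∃ a b : RB, g i = a * w + b * ℓp := by
      intro i
      have hgi : g i ∈ I := hI ▸ Ideal.subset_span ⟨i, rfl⟩
      have h1 : Ideal.Quotient.mk (Ideal.span {ℓp}) (g i) ∈ Ideal.span {z} := by
        rw [← hz]; exact Ideal.mem_map_of_mem _ hgi
      obtain ⟨aq, haq⟩ := Ideal.mem_span_singleton'.mp h1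
      obtain ⟨a, rfl⟩ := hsur aq
      have h2 : Ideal.Quotient.mk (Ideal.span {ℓp}) (a * w - g i) = 0 := by
        rw [RingHom.map_sub, RingHom.map_mul, hwz, haq, sub_self]
      rw [Ideal.Quotient.eq_zero_iff_mem] at h2
      obtain ⟨b, hb⟩ := Ideal.mem_span_singleton'.mp h2
      exact ⟨a, -b, by linear_combination hb⟩
    choose A B hAB using hgen
    obtain ⟨rc, hrc⟩ := Ideal.mem_span_range_iff_exists_fun.mp (hI ▸ hwI)
    have hHg : ∀ i, φ (g i) = φ (A i) * φ w := by
      intro i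
      rw [hAB i, map_add, map_mul, map_mul, hφℓ, mul_zero, add_zero]
    have hWsum : (∑ i, φ (rc i) * φ (A i)) * φ w = φ w := by
      have hφrc := congrArg φ hrc
      rw [map_sum] at hφrc
      calc (∑ i, φ (rc i) * φ (A i)) * φ w
          = ∑ i, φ (rc i) * (φ (A i) * φ w) := by
            rw [Finset.sum_mul]; exact Finset.sum_congr rfl fun i _ => by ring
        _ = ∑ i, φ (rc i * g i) := by
            refine Finset.sum_congr rfl fun i _ => ?_
            rw [map_mul, hHg i]
        _ = φ w := hφrc
    have hevalφ : ∀ (t0 v0 : ℂ) (f : RB),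
        eval (Sum.elim ![(0:ℂ),0] ![t0,v0]) (φ f) = eval (Sum.elim ![lamc,1] ![t0,v0]) f := by
      intro t0 v0 f
      have hfun : (fun i => eval (Sum.elim ![(0:ℂ),0] ![t0,v0]) (σf i))
          = Sum.elim ![lamc,1] ![t0,v0] := by
        funext i
        rcases i with j | j <;> fin_cases j <;> simp [hσ]
      rw [hφ, eval_aeval', hfun]
    have hE00 : ∀ i, eval (Sum.elim ![lamc,(1:ℂ)] ![(0:ℂ),0]) (g i) = 0 := by
      intro i
      have h := scale_eval (hbihom i) 1 0 ![lamc,1] ![(0:ℂ),0]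
      have he : (Sum.elim (fun j => (1:ℂ) * ![lamc,1] j) (fun j => (0:ℂ) * ![(0:ℂ),0] j))
          = Sum.elim ![lamc,(1:ℂ)] ![(0:ℂ),0] := by
        funext i; rcases i with j|j <;> fin_cases j <;> simp
      rw [he] at h
      rw [h, zero_pow (Nat.one_le_iff_ne_zero.mp hn), mul_zero, zero_mul]
    by_cases hW0 : eval (Sum.elim ![(0:ℂ),0] ![(0:ℂ),0]) (φ w) = 0
    · -- the restriction of w has a zero (t0, v0) ≠ (0,0); get a point of V(I) on the line
      have h0 : evTV 0 0 (ψB (φ w)) = 0 := by rw [evTV_psi]; exact hW0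
      obtain ⟨t0, v0, hne, hz0⟩ := exists_tv_zero _ h0
      rw [evTV_psi] at hz0
      have hEi : ∀ i, eval (Sum.elim ![lamc,(1:ℂ)] ![t0,v0]) (g i) = 0 := by
        intro i
        have h := congrArg (eval (Sum.elim ![(0:ℂ),0] ![t0,v0])) (hHg i)
        rw [eval_mul, hz0, mul_zero, hevalφ] at h
        exact h
      have h1 : (![lamc, (1:ℂ)] : Fin 2 → ℂ) ≠ 0 := by
        intro h; simpa using congrFun h 1
      have h2 : (![t0, v0] : Fin 2 → ℂ) ≠ 0 := by
        intro h
        rcases hne with h' | h'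
        · exact h' (by simpa using congrFun h 0)
        · exact h' (by simpa using congrFun h 1)
      set p : PtPP := (Projectivization.mk ℂ ![lamc,1] h1, Projectivization.mk ℂ ![t0,v0] h2)
        with hp
      obtain ⟨a, ha⟩ := Projectivization.exists_smul_eq_mk_rep ℂ ![lamc,(1:ℂ)] h1
      obtain ⟨b, hb⟩ := Projectivization.exists_smul_eq_mk_rep ℂ ![t0,v0] h2
      have hrep1 : p.1.rep = fun j => (a:ℂ) * ![lamc,1] j := by
        funext j
        rw [hp]
        show (Projectivization.mk ℂ ![lamc,1] h1).rep j = _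
        rw [← ha]
        simp [Units.smul_def]
      have hrep2 : p.2.rep = fun j => (b:ℂ) * ![t0,v0] j := by
        funext j
        rw [hp]
        show (Projectivization.mk ℂ ![t0,v0] h2).rep j = _
        rw [← hb]
        simp [Units.smul_def]
      have hpmem : p ∈ biV (Set.range g) := by
        rintro gg ⟨i, rfl⟩
        show eval (Sum.elim p.1.rep p.2.rep) (g i) = 0
        rw [hrep1, hrep2]
        have hs := scale_eval (hbihom i) (a:ℂ) (b:ℂ) ![lamc,1] ![t0,v0]
        rw [hs, hEi i, mul_zero]
      have hpin : p.1 ∈ S := by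
        rw [hS]; exact Finset.mem_image_of_mem _ (hfin.mem_toFinset.mpr hpmem)
      refine hfac p.1 hpin ?_
      have hval : lamc * c 0 + c 1 = 0 := by rw [hlam]; field_simp; ring
      rw [hrep1]
      simp only [Matrix.cons_val_zero, Matrix.cons_val_one, Matrix.head_cons]
      linear_combination (a:ℂ) * hval
    · -- w does not vanish at the "origin" of the line: get 1 = 0
      have hA0 : ∀ i, eval (Sum.elim ![(0:ℂ),0] ![(0:ℂ),0]) (φ (A i)) = 0 := by
        intro i
        have h := congrArg (eval (Sum.elim ![(0:ℂ),0] ![(0:ℂ),0])) (hHg i)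
        rw [eval_mul, hevalφ, hE00 i] at h
        rcases mul_eq_zero.mp h.symm with h' | h'
        · exact h'
        · exact absurd h' hW0
      have hWne : φ w ≠ 0 := fun h => hW0 (by rw [h, map_zero])
      have hone : (∑ i, φ (rc i) * φ (A i)) = 1 :=
        mul_right_cancel₀ hWne (by rw [hWsum, one_mul])
      have hev := congrArg (eval (Sum.elim ![(0:ℂ),0] ![(0:ℂ),0])) hone
      rw [map_sum] at hev
      simp only [eval_mul, hA0, mul_zero, Finset.sum_const_zero, map_one] at hev
      exact one_ne_zero hev.symm
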